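/- Let p > 1, a ∈ ℝ, A > 0, B > 0, and let v be the maximal solution of the ODE v''(t) = |v(t)|^{p-1} v(t) log^a(2 + v(t)²) with v(0) = A and v'(0) = B. Then the maximal existence time T of v is finite (the solution blows up in finite time). -/

import Mathlib

open Real

/-- Monotonicity from pointwise derivatives on `Ici`. -/
lemma myMonoIci {f f' : ℝ → ℝ} {t₀ : ℝ}
    (hf : ∀ t, t₀ ≤ t → HasDerivAt f (f' t) t)
    (h' : ∀ t, t₀ < t → 0 ≤ f' t) : MonotoneOn f (Set.Ici t₀) := by
  apply monotoneOn_of_deriv_nonneg (convex_Ici t₀)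
  · exact fun t ht => (hf t ht).continuousAt.continuousWithinAt
  · rw [interior_Ici]
    exact fun t ht => (hf t (le_of_lt ht)).differentiableAt.differentiableWithinAt
  · rw [interior_Ici]
    intro t ht
    rw [(hf t ht.le).deriv]
    exact h' t ht

/-- Antitonicity from pointwise derivatives on `Ici`. -/
lemma myAntiIci {f f' : ℝ → ℝ} {t₀ : ℝ}
    (hf : ∀ t, t₀ ≤ t → HasDerivAt f (f' t) t)
    (h' : ∀ t, t₀ < t → f' t ≤ 0) : AntitoneOn f (Set.Ici t₀) := by
  apply antitoneOn_of_deriv_nonpos (convex_Ici t₀)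
  · exact fun t ht => (hf t ht).continuousAt.continuousWithinAt
  · rw [interior_Ici]
    exact fun t ht => (hf t (le_of_lt ht)).differentiableAt.differentiableWithinAt
  · rw [interior_Ici]
    intro t ht
    rw [(hf t ht.le).deriv]
    exact h' t ht

/-- Monotonicity from pointwise derivatives on `Icc`. -/
lemma myMonoIcc {f f' : ℝ → ℝ} {a b : ℝ}
    (hf : ∀ t ∈ Set.Icc a b, HasDerivAt f (f' t) t)
    (h' : ∀ t ∈ Set.Ioo a b, 0 ≤ f' t) : MonotoneOn f (Set.Icc a b) := by
  apply monotoneOn_of_deriv_nonneg (convex_Icc a b)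
  · exact fun t ht => (hf t ht).continuousAt.continuousWithinAt
  · rw [interior_Icc]
    exact fun t ht =>
      (hf t ⟨ht.1.le, ht.2.le⟩).differentiableAt.differentiableWithinAt
  · rw [interior_Icc]
    intro t ht
    rw [(hf t ⟨ht.1.le, ht.2.le⟩).deriv]
    exact h' t ht

set_option maxHeartbeats 1600000 in
lemma stmt9_aux (p a A B : ℝ) (hp : 1 < p) (hA : 0 < A) (hB : 0 < B) :
    ¬ ∃ v : ℝ → ℝ, v 0 = A ∧ deriv v 0 = B ∧
      ∀ t : ℝ, 0 ≤ t →
        HasDerivAt v (deriv v t) t ∧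
        HasDerivAt (deriv v)
          (|v t| ^ (p - 1) * v t * (Real.log (2 + (v t) ^ 2)) ^ a) t := by
  rintro ⟨v, hv0, hD0, hODE⟩
  set D := deriv v with hDdef
  set F : ℝ → ℝ := fun t => |v t| ^ (p - 1) * v t * (Real.log (2 + (v t) ^ 2)) ^ a
    with hFdef
  have hODE1 : ∀ t, 0 ≤ t → HasDerivAt v (D t) t := fun t ht => (hODE t ht).1
  have hODE2 : ∀ t, 0 ≤ t → HasDerivAt D (F t) t := fun t ht => (hODE t ht).2
  have hlog : ∀ t, 0 < Real.log (2 + (v t) ^ 2) := by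
    intro t
    apply Real.log_pos
    nlinarith [sq_nonneg (v t)]
  have hFposOf : ∀ t, 0 < v t → 0 < F t := by
    intro t hv
    exact mul_pos (mul_pos (Real.rpow_pos_of_pos (abs_pos.mpr hv.ne') _) hv)
      (Real.rpow_pos_of_pos (hlog t) a)
  -- Step 1: v stays positive
  have hvpos : ∀ t, 0 ≤ t → 0 < v t := by
    by_contra hcon
    push_neg at hcon
    obtain ⟨t₀, ht₀, hvt₀⟩ := hcon
    set S : Set ℝ := {t | 0 ≤ t ∧ v t ≤ 0} with hSdef
    have hSne : S.Nonempty := ⟨t₀, ht₀, hvt₀⟩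
    have hSbd : BddBelow S := ⟨0, fun s hs => hs.1⟩
    set T := sInf S with hTdef
    have hT0 : 0 ≤ T := le_csInf hSne fun s hs => hs.1
    have hvT : v T ≤ 0 := by
      by_contra hvT
      push_neg at hvT
      have hc : ContinuousAt v T := (hODE1 T hT0).continuousAt
      have h2 : ∀ᶠ s in nhds T, 0 < v s :=
        hc.eventually_mem (isOpen_Ioi.mem_nhds hvT)
      obtain ⟨ε, hε, hball⟩ := Metric.eventually_nhds_iff.mp h2
      obtain ⟨s, hsS, hs⟩ := exists_lt_of_csInf_lt hSne (by linarith : sInf S < T + ε)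
      have hsT : T ≤ s := csInf_le hSbd hsS
      have : 0 < v s := hball (by
        rw [Real.dist_eq, abs_lt]
        constructor <;> linarith)
      exact absurd hsS.2 (not_le.mpr this)
    have hTpos : 0 < T := by
      rcases hT0.lt_or_eq with h | h
      · exact h
      · exfalso; rw [← h] at hvT; rw [hv0] at hvT; linarith
    have hmin : ∀ s, 0 ≤ s → s < T → 0 < v s := by
      intro s h0 hsT
      by_contra h
      push_neg at h
      exact absurd (csInf_le hSbd ⟨h0, h⟩) (not_le.mpr hsT)
    have hDmono : MonotoneOn D (Set.Icc 0 T) := by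
      apply myMonoIcc (fun t ht => hODE2 t ht.1)
      intro t ht
      exact (hFposOf t (hmin t ht.1.le ht.2)).le
    have hDgeB : ∀ t ∈ Set.Icc (0:ℝ) T, B ≤ D t := by
      intro t ht
      have := hDmono ⟨le_refl 0, hT0⟩ ht ht.1
      rwa [hD0] at this
    have hvmono : MonotoneOn v (Set.Icc 0 T) := by
      apply myMonoIcc (fun t ht => hODE1 t ht.1)
      intro t ht
      exact le_trans hB.le (hDgeB t ⟨ht.1.le, ht.2.le⟩)
    have : v 0 ≤ v T := hvmono ⟨le_refl 0, hT0⟩ ⟨hT0, le_refl T⟩ hT0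
    rw [hv0] at this
    linarith
  have hFpos : ∀ t, 0 ≤ t → 0 < F t := fun t ht => hFposOf t (hvpos t ht)
  have hDmono : MonotoneOn D (Set.Ici 0) :=
    myMonoIci hODE2 (fun t ht => (hFpos t ht.le).le)
  have hDB : ∀ t, 0 ≤ t → B ≤ D t := by
    intro t ht
    have := hDmono Set.self_mem_Ici ht ht
    rwa [hD0] at this
  have hvlin : ∀ t, 0 ≤ t → A + B * t ≤ v t := by
    intro t ht
    have hg : ∀ s, (0:ℝ) ≤ s → HasDerivAt (fun u => v u - B * u) (D s - B) s := by
      intro s hs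
      exact (hODE1 s hs).sub (by simpa using (hasDerivAt_id s).const_mul B)
    have hmono : MonotoneOn (fun u => v u - B * u) (Set.Ici 0) :=
      myMonoIci hg (fun s hs => by linarith [hDB s hs.le])
    have := hmono Set.self_mem_Ici ht ht
    simp only [mul_zero, sub_zero, hv0] at this
    linarith
  -- Step 2: power lower bound on F
  obtain ⟨c, q, hc, hq, hFq⟩ :
      ∃ c q : ℝ, 0 < c ∧ 1 < q ∧ ∀ t, 0 ≤ t → 1 ≤ v t → c * v t ^ q ≤ F t := by
    rcases le_or_gt 0 a with ha | ha
    · refine ⟨(Real.log 2) ^ a, p, Real.rpow_pos_of_pos (Real.log_pos one_lt_two) a,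
        hp, ?_⟩
      intro t ht hv1
      have hv : 0 < v t := hvpos t ht
      have h1 : |v t| ^ (p - 1) * v t = v t ^ p := by
        rw [abs_of_pos hv, ← Real.rpow_add_one hv.ne', sub_add_cancel]
      have h2 : Real.log 2 ^ a ≤ Real.log (2 + v t ^ 2) ^ a :=
        Real.rpow_le_rpow (Real.log_nonneg one_le_two)
          (Real.log_le_log (by norm_num) (by nlinarith [sq_nonneg (v t)])) ha
      have h3 : (0:ℝ) ≤ v t ^ p := (Real.rpow_pos_of_pos hv p).le
      simp only [hFdef]
      rw [h1]
      nlinarith [h2, h3]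
    · set δ : ℝ := (p - 1) / (4 * (-a)) with hδdef
      have hδ : 0 < δ := div_pos (by linarith) (by linarith)
      have hK : (0:ℝ) < 3 ^ δ / δ :=
        div_pos (Real.rpow_pos_of_pos (by norm_num) δ) hδ
      refine ⟨(3 ^ δ / δ) ^ a, (p + 1) / 2, Real.rpow_pos_of_pos hK a,
        by linarith, ?_⟩
      intro t ht hv1
      have hv : 0 < v t := hvpos t ht
      have h1 : |v t| ^ (p - 1) * v t = v t ^ p := by
        rw [abs_of_pos hv, ← Real.rpow_add_one hv.ne', sub_add_cancel]
      have hL : Real.log (2 + v t ^ 2) ≤ (3 ^ δ / δ) * v t ^ (2 * δ) := by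
        have e1 : Real.log (2 + v t ^ 2) ≤ (2 + v t ^ 2) ^ δ / δ :=
          Real.log_le_rpow_div (by positivity) hδ
        have e2 : (2 + v t ^ 2 : ℝ) ≤ 3 * v t ^ 2 := by nlinarith
        have e3 : (2 + v t ^ 2 : ℝ) ^ δ ≤ (3 * v t ^ 2) ^ δ :=
          Real.rpow_le_rpow (by positivity) e2 hδ.le
        have e4 : (3 * v t ^ 2 : ℝ) ^ δ = 3 ^ δ * v t ^ (2 * δ) := by
          rw [Real.mul_rpow (by norm_num) (by positivity)]
          congr 1
          rw [← Real.rpow_natCast (v t) 2, ← Real.rpow_mul hv.le]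
          norm_num [mul_comm]
        calc Real.log (2 + v t ^ 2) ≤ (2 + v t ^ 2) ^ δ / δ := e1
          _ ≤ (3 * v t ^ 2) ^ δ / δ := by gcongr
          _ = (3 ^ δ / δ) * v t ^ (2 * δ) := by rw [e4]; ring
      have hLa : ((3 ^ δ / δ) * v t ^ (2 * δ)) ^ a ≤ Real.log (2 + v t ^ 2) ^ a :=
        Real.rpow_le_rpow_of_nonpos (hlog t) hL ha.le
      have hsplit : ((3 ^ δ / δ) * v t ^ (2 * δ)) ^ a
          = (3 ^ δ / δ) ^ a * v t ^ (2 * δ * a) := by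
        rw [Real.mul_rpow hK.le (Real.rpow_pos_of_pos hv _).le,
          ← Real.rpow_mul hv.le]
      have hexp : p + 2 * δ * a = (p + 1) / 2 := by
        have ha0 : a ≠ 0 := ha.ne
        rw [hδdef]
        field_simp
        ring
      have hcomb : v t ^ p * v t ^ (2 * δ * a) = v t ^ ((p + 1) / 2) := by
        rw [← Real.rpow_add hv, hexp]
      have h3 : (0:ℝ) ≤ v t ^ p := (Real.rpow_pos_of_pos hv p).le
      simp only [hFdef]
      rw [h1]
      calc (3 ^ δ / δ) ^ a * v t ^ ((p + 1) / 2)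
          = v t ^ p * ((3 ^ δ / δ) ^ a * v t ^ (2 * δ * a)) := by
            rw [← hcomb]; ring
        _ = v t ^ p * ((3 ^ δ / δ) * v t ^ (2 * δ)) ^ a := by rw [hsplit]
        _ ≤ v t ^ p * Real.log (2 + v t ^ 2) ^ a :=
            mul_le_mul_of_nonneg_left hLa h3

  clear_value F D
  -- Step 3: blow-up
  set t₁ : ℝ := max 0 ((1 - A) / B) with ht₁def
  have ht₁0 : (0:ℝ) ≤ t₁ := le_max_left _ _
  have h1v : ∀ t, t₁ ≤ t → 1 ≤ v t := by
    intro t ht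
    have ht0 : 0 ≤ t := le_trans ht₁0 ht
    have h := hvlin t ht0
    have h2 : (1 - A) / B ≤ t := le_trans (le_max_right _ _) ht
    rw [div_le_iff₀ hB] at h2
    nlinarith
  have hq1 : (0:ℝ) < q + 1 := by linarith
  set E : ℝ → ℝ := fun t => D t ^ 2 - 2 * (c / (q + 1)) * v t ^ (q + 1) with hEdef
  have hE' : ∀ t, t₁ ≤ t → HasDerivAt E (2 * D t * (F t - c * v t ^ q)) t := by
    intro t ht
    have ht0 : 0 ≤ t := le_trans ht₁0 ht
    have h1 : HasDerivAt (fun s => D s ^ 2) (2 * D t * F t) t := by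
      have := (hODE2 t ht0).fun_pow 2
      refine this.congr_deriv ?_
      ring
    have h2 : HasDerivAt (fun s => v s ^ (q + 1)) ((q + 1) * v t ^ q * D t) t := by
      have := (hODE1 t ht0).rpow_const (p := q + 1) (Or.inl (hvpos t ht0).ne')
      convert this using 1
      rw [add_sub_cancel_right]
      ring
    have := h1.sub (h2.const_mul (2 * (c / (q + 1))))
    refine this.congr_deriv ?_
    field_simp
  have hEmono : MonotoneOn E (Set.Ici t₁) := by
    apply myMonoIci hE'
    intro t ht
    have ht0 : 0 ≤ t := le_trans ht₁0 ht.le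
    have h1 := hFq t ht0 (h1v t ht.le)
    have h2 := hDB t ht0
    nlinarith
  set E₁ : ℝ := E t₁ with hE₁def
  have hE_lb : ∀ t, t₁ ≤ t → E₁ ≤ E t := fun t ht =>
    hEmono Set.self_mem_Ici ht ht
  clear_value E₁ E
  set M : ℝ := max 1 ((|E₁| * (q + 1) / c) ^ (q + 1)⁻¹) with hMdef
  have hM1 : (1:ℝ) ≤ M := le_max_left _ _
  have hM : ∀ x : ℝ, M ≤ x → |E₁| ≤ c / (q + 1) * x ^ (q + 1) := by
    intro x hx
    have hx1 : (1:ℝ) ≤ x := le_trans hM1 hx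
    have h1 : (|E₁| * (q + 1) / c) ^ (q + 1)⁻¹ ≤ x :=
      le_trans (le_max_right _ _) hx
    have h2 : ((|E₁| * (q + 1) / c) ^ (q + 1)⁻¹) ^ (q + 1) ≤ x ^ (q + 1) :=
      Real.rpow_le_rpow (Real.rpow_nonneg (by positivity) _) h1 (by linarith)
    rw [Real.rpow_inv_rpow (by positivity) hq1.ne'] at h2
    have h3 := mul_le_mul_of_nonneg_left h2 (div_pos hc hq1).le
    calc |E₁| = c / (q + 1) * (|E₁| * (q + 1) / c) := by
          field_simp
        _ ≤ c / (q + 1) * x ^ (q + 1) := h3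
  clear_value M
  set t₂ : ℝ := max t₁ ((M - A) / B) with ht₂def
  have ht₂1 : t₁ ≤ t₂ := le_max_left _ _
  have ht₂0 : (0:ℝ) ≤ t₂ := le_trans ht₁0 ht₂1
  have hvM : ∀ t, t₂ ≤ t → M ≤ v t := by
    intro t ht
    have ht0 : 0 ≤ t := le_trans ht₂0 ht
    have h := hvlin t ht0
    have h2 : (M - A) / B ≤ t := le_trans (le_max_right _ _) ht
    rw [div_le_iff₀ hB] at h2
    nlinarith
  clear_value t₂
  set r : ℝ := (q + 1) / 2 with hrdef
  have hr : 1 < r := by rw [hrdef]; linarith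
  set c' : ℝ := Real.sqrt (c / (q + 1)) with hc'def
  have hc' : 0 < c' := Real.sqrt_pos.mpr (div_pos hc hq1)
  have hc'sq : c' ^ 2 = c / (q + 1) := Real.sq_sqrt (div_pos hc hq1).le
  have hDr : ∀ t, t₂ ≤ t → c' * v t ^ r ≤ D t := by
    intro t ht
    have ht1 : t₁ ≤ t := le_trans ht₂1 ht
    have ht0 : 0 ≤ t := le_trans ht₂0 ht
    have hv : 0 < v t := hvpos t ht0
    have e1 : E₁ ≤ E t := hE_lb t ht1
    have e2 : |E₁| ≤ c / (q + 1) * v t ^ (q + 1) := hM _ (hvM t ht)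
    have hvr2 : (v t ^ r) ^ 2 = v t ^ (q + 1) := by
      have hrr : r + r = q + 1 := by rw [hrdef]; ring
      rw [sq, ← Real.rpow_add hv, hrr]
    have key : (c' * v t ^ r) ^ 2 ≤ D t ^ 2 := by
      rw [mul_pow, hvr2, hc'sq]
      have e1' : E₁ ≤ D t ^ 2 - 2 * (c / (q + 1)) * v t ^ (q + 1) := by
        simpa [hEdef] using e1
      linarith [neg_abs_le E₁, e2]
    have hDpos : 0 < D t := lt_of_lt_of_le hB (hDB t ht0)
    have hxpos : 0 ≤ c' * v t ^ r :=
      (mul_pos hc' (Real.rpow_pos_of_pos hv r)).le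
    have := Real.sqrt_le_sqrt key
    rwa [Real.sqrt_sq hxpos, Real.sqrt_sq hDpos.le] at this
  -- final contradiction via w(t) = v(t)^(1-r) + (r-1) c' t
  set W : ℝ → ℝ := fun s => v s ^ (1 - r) + (r - 1) * c' * s with hWdef
  have hW' : ∀ t, t₂ ≤ t →
      HasDerivAt W (D t * (1 - r) * v t ^ (1 - r - 1) + (r - 1) * c') t := by
    intro t ht
    have ht0 : 0 ≤ t := le_trans ht₂0 ht
    have h1 := (hODE1 t ht0).rpow_const (p := 1 - r) (Or.inl (hvpos t ht0).ne')
    have h2 : HasDerivAt (fun s : ℝ => (r - 1) * c' * s) ((r - 1) * c') t := by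
      simpa using (hasDerivAt_id t).const_mul ((r - 1) * c')
    exact h1.add h2
  have hWanti : AntitoneOn W (Set.Ici t₂) := by
    apply myAntiIci hW'
    intro t ht
    have ht0 : 0 ≤ t := le_trans ht₂0 ht.le
    have hv : 0 < v t := hvpos t ht0
    have hX : 0 < v t ^ (1 - r - 1) := Real.rpow_pos_of_pos hv _
    have hvv : v t ^ r * v t ^ (1 - r - 1) = 1 := by
      have : r + (1 - r - 1) = 0 := by ring
      rw [← Real.rpow_add hv, this, Real.rpow_zero]
    have h1 := hDr t ht.le
    have h5 : v t ^ (1 - r - 1) * (c' * v t ^ r) ≤ v t ^ (1 - r - 1) * D t :=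
      mul_le_mul_of_nonneg_left h1 hX.le
    have h6 : v t ^ (1 - r - 1) * (c' * v t ^ r) = c' := by
      rw [show v t ^ (1 - r - 1) * (c' * v t ^ r)
        = c' * (v t ^ r * v t ^ (1 - r - 1)) by ring, hvv, mul_one]
    nlinarith [h5, h6, hr, hc']
  obtain ⟨n, hn⟩ := exists_nat_gt ((v t₂ ^ (1 - r) + 1) / ((r - 1) * c'))
  have hKpos : 0 < (r - 1) * c' := mul_pos (by linarith) hc'
  rw [div_lt_iff₀ hKpos] at hn
  set t₃ : ℝ := t₂ + n with ht₃def
  have ht₃ : t₂ ≤ t₃ := by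
    have : (0:ℝ) ≤ n := Nat.cast_nonneg n
    rw [ht₃def]; linarith
  have hend : W t₃ ≤ W t₂ := hWanti Set.self_mem_Ici ht₃ ht₃
  have hg₃ : 0 < v t₃ ^ (1 - r) :=
    Real.rpow_pos_of_pos (hvpos t₃ (le_trans ht₂0 ht₃)) _
  have hW₂ : W t₂ = v t₂ ^ (1 - r) + (r - 1) * c' * t₂ := rfl
  have hW₃ : W t₃ = v t₃ ^ (1 - r) + (r - 1) * c' * (t₂ + n) := by rw [ht₃def]
  clear_value W t₃
  rw [hW₂, hW₃] at hend
  nlinarith [hend, hg₃, hn]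

/-- The ODE `v'' = |v|^{p-1} v log^a(2+v²)` with positive initial data and velocity
has no global solution on `[0,∞)`: the maximal existence time is finite. -/
theorem stmt9 (p a A B : ℝ) (hp : 1 < p) (hA : 0 < A) (hB : 0 < B) :
    ¬ ∃ v : ℝ → ℝ, v 0 = A ∧ deriv v 0 = B ∧
      ∀ t : ℝ, 0 ≤ t →
        HasDerivAt v (deriv v t) t ∧
        HasDerivAt (deriv v)
          (|v t| ^ (p - 1) * v t * (Real.log (2 + (v t) ^ 2)) ^ a) t :=
  stmt9_aux p a A B hp hA hB
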